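/- Assume E_c is a critical energy of the random polymer model. For every ε₀ > 0 there exists a constant C < ∞ such that for all real ε with |ε| ≤ ε₀, all sign sequences ω ∈ Ω₀ and all integers m ≤ k: ‖T_ω^{E_c+ε}(k,m)‖ ≤ C·e^{C|ε|·(k−m)}. Consequently there is C′ < ∞ with |γ(E_c+ε)| ≤ C′|ε| for |ε| ≤ ε₀. -/

import Mathlib

open MeasureTheory Filter
open scoped BigOperators ENNReal

set_option synthInstance.maxHeartbeats 1000000
set_option maxHeartbeats 2000000

noncomputable section

/-- Single-site transfer matrix `T_{v,t}`. -/
def Tst (v t : ℝ) : Matrix (Fin 2) (Fin 2) ℝ := (1 / t) • !![v, -t ^ 2; 1, 0]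

/-- Transfer matrix over one polymer block of length `L`. -/
def Tblock (L : ℕ) (vh th : ℕ → ℝ) (E : ℝ) : Matrix (Fin 2) (Fin 2) ℝ :=
  ((List.range L).reverse.map fun j => Tst (vh j - E) (th j)).prod

/-- The transfer matrix of the polymer of sign `s` at energy `E`. -/
def Tpoly (L : Bool → ℕ) (vh th : Bool → ℕ → ℝ) (E : ℝ) (s : Bool) :
    Matrix (Fin 2) (Fin 2) ℝ :=
  Tblock (L s) (vh s) (th s) E

/-- Transfer matrix over the polymers `m, m+1, …, k-1`. -/
def TW (L : Bool → ℕ) (vh th : Bool → ℕ → ℝ) (ω : ℤ → Bool) (E : ℝ) (k m : ℤ) :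
    Matrix (Fin 2) (Fin 2) ℝ :=
  ((List.range (k - m).toNat).map fun i => Tpoly L vh th E (ω (k - 1 - i))).prod

/-- Rotation matrix by angle `η`. -/
def rotMat (η : ℝ) : Matrix (Fin 2) (Fin 2) ℝ :=
  !![Real.cos η, -Real.sin η; Real.sin η, Real.cos η]

/-- Euclidean operator norm of a real 2×2 matrix. -/
def opNormR (A : Matrix (Fin 2) (Fin 2) ℝ) : ℝ := ‖Matrix.toEuclideanCLM (𝕜 := ℝ) A‖

/-- Average `⟨c±⟩ = p₊ c₊ + p₋ c₋` (real version). -/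
def avgR (p : ℝ) (c : Bool → ℝ) : ℝ := p * c true + (1 - p) * c false

/-- Average `⟨c±⟩ = p₊ c₊ + p₋ c₋` (complex version). -/
def avgC (p : ℝ) (c : Bool → ℂ) : ℂ := p * c true + (1 - p) * c false

namespace Stmt5Aux

lemma opNormR_nonneg (A : Matrix (Fin 2) (Fin 2) ℝ) : 0 ≤ opNormR A := norm_nonneg _

lemma opNormR_mul_le (A B : Matrix (Fin 2) (Fin 2) ℝ) :
    opNormR (A * B) ≤ opNormR A * opNormR B := by
  unfold opNormR; rw [map_mul]; exact norm_mul_le _ _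

lemma opNormR_one_le : opNormR 1 ≤ 1 := by
  unfold opNormR; rw [map_one]; exact ContinuousLinearMap.norm_id_le

lemma opNormR_zero : opNormR 0 = 0 := by
  unfold opNormR; rw [map_zero]; exact norm_zero

lemma opNormR_add_le (A B : Matrix (Fin 2) (Fin 2) ℝ) :
    opNormR (A + B) ≤ opNormR A + opNormR B := by
  unfold opNormR; rw [map_add]; exact norm_add_le _ _

lemma opNormR_smul (c : ℝ) (A : Matrix (Fin 2) (Fin 2) ℝ) :
    opNormR (c • A) = |c| * opNormR A := by
  unfold opNormR
  rw [_root_.map_smul]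
  rw [norm_smul c (Matrix.toEuclideanCLM (𝕜 := ℝ) A), Real.norm_eq_abs]

lemma opNormR_prod_le {ι : Type*} (f : ι → Matrix (Fin 2) (Fin 2) ℝ) (a : ℝ)
    (ha : 0 ≤ a) :
    ∀ l : List ι, (∀ i ∈ l, opNormR (f i) ≤ a) →
      opNormR ((l.map f).prod) ≤ a ^ l.length
  | [], _ => by simpa using opNormR_one_le
  | i :: l, h => by
    simp only [List.map_cons, List.prod_cons, List.length_cons]
    calc opNormR (f i * (l.map f).prod)
        ≤ opNormR (f i) * opNormR ((l.map f).prod) := opNormR_mul_le _ _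
      _ ≤ a * a ^ l.length := by
          refine mul_le_mul (h i List.mem_cons_self)
            (opNormR_prod_le f a ha l fun j hj => h j (List.mem_cons_of_mem _ hj))
            (opNormR_nonneg _) ha
      _ = a ^ (l.length + 1) := by ring

lemma conj_list_prod (M Mi : Matrix (Fin 2) (Fin 2) ℝ) (h1 : M * Mi = 1)
    (h2 : Mi * M = 1) {ι : Type*} (f : ι → Matrix (Fin 2) (Fin 2) ℝ) :
    ∀ l : List ι, (l.map fun i => M * f i * Mi).prod = M * (l.map f).prod * Mi
  | [] => by simpa using h1.symm
  | i :: l => by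
    simp only [List.map_cons, List.prod_cons, conj_list_prod M Mi h1 h2 f l]
    have : (M * f i * Mi) * (M * (l.map f).prod * Mi)
        = M * f i * (Mi * M) * ((l.map f).prod * Mi) := by noncomm_ring
    rw [this, h2]
    noncomm_ring

lemma unconj (M Mi P : Matrix (Fin 2) (Fin 2) ℝ) (h2 : Mi * M = 1) :
    Mi * (M * P * Mi) * M = P := by
  have : Mi * (M * P * Mi) * M = (Mi * M) * P * (Mi * M) := by noncomm_ring
  rw [this, h2, one_mul, mul_one]

lemma Tst_sub (v Ec ε t : ℝ) :
    Tst (v - (Ec + ε)) t - Tst (v - Ec) t = (-ε / t) • !![(1:ℝ),0;0,0] := by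
  unfold Tst
  ext i j
  fin_cases i <;> fin_cases j <;> (simp [Matrix.smul_apply]; try ring)

lemma block_lip (Ec ε₀ : ℝ) (hε₀ : 0 ≤ ε₀) (v t : ℕ → ℝ) (l : List ℕ) :
    ∃ c K : ℝ, 0 ≤ c ∧ 0 ≤ K ∧ ∀ ε : ℝ, |ε| ≤ ε₀ →
      opNormR ((l.map fun j => Tst (v j - (Ec + ε)) (t j)).prod -
        (l.map fun j => Tst (v j - Ec) (t j)).prod) ≤ c * |ε| ∧
      opNormR ((l.map fun j => Tst (v j - (Ec + ε)) (t j)).prod) ≤ K := by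
  induction l with
  | nil =>
    exact ⟨0, 1, le_refl 0, zero_le_one, fun ε hε => by
      simp only [List.map_nil, List.prod_nil, sub_self, zero_mul]
      exact ⟨le_of_eq opNormR_zero, opNormR_one_le⟩⟩
  | cons j l ih =>
    obtain ⟨c, K, hc, hK, hIH⟩ := ih
    set cj : ℝ := |t j|⁻¹ * opNormR !![(1:ℝ),0;0,0] with hcjdef
    have hcj : 0 ≤ cj := mul_nonneg (inv_nonneg.2 (abs_nonneg _)) (opNormR_nonneg _)
    have hsite : ∀ ε : ℝ,
        opNormR (Tst (v j - (Ec + ε)) (t j) - Tst (v j - Ec) (t j)) = cj * |ε| := by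
      intro ε
      rw [Tst_sub, opNormR_smul, abs_div, abs_neg, div_eq_mul_inv]
      ring
    set Kj : ℝ := opNormR (Tst (v j - Ec) (t j)) + cj * ε₀ with hKjdef
    have hKj : 0 ≤ Kj := add_nonneg (opNormR_nonneg _) (mul_nonneg hcj hε₀)
    have hg : ∀ ε : ℝ, |ε| ≤ ε₀ → opNormR (Tst (v j - (Ec + ε)) (t j)) ≤ Kj := by
      intro ε hε
      have h0 : Tst (v j - (Ec + ε)) (t j) = Tst (v j - Ec) (t j) +
          (Tst (v j - (Ec + ε)) (t j) - Tst (v j - Ec) (t j)) := by abel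
      rw [h0]
      refine le_trans (opNormR_add_le _ _) ?_
      rw [hsite]
      exact add_le_add (le_refl _) (mul_le_mul_of_nonneg_left hε hcj)
    refine ⟨Kj * c + cj * K, Kj * K, by positivity, by positivity, fun ε hε => ?_⟩
    obtain ⟨hd, hp⟩ := hIH ε hε
    have hP0 : opNormR ((l.map fun j => Tst (v j - Ec) (t j)).prod) ≤ K := by
      have := (hIH 0 (by simpa using hε₀)).2
      simpa using this
    constructor
    · simp only [List.map_cons, List.prod_cons]
      have hid : Tst (v j - (Ec + ε)) (t j) * (l.map fun j => Tst (v j - (Ec + ε)) (t j)).prod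
          - Tst (v j - Ec) (t j) * (l.map fun j => Tst (v j - Ec) (t j)).prod
          = Tst (v j - (Ec + ε)) (t j) *
              ((l.map fun j => Tst (v j - (Ec + ε)) (t j)).prod -
               (l.map fun j => Tst (v j - Ec) (t j)).prod)
            + (Tst (v j - (Ec + ε)) (t j) - Tst (v j - Ec) (t j)) *
               (l.map fun j => Tst (v j - Ec) (t j)).prod := by noncomm_ring
      rw [hid]
      refine le_trans (opNormR_add_le _ _) ?_
      have h1 : opNormR (Tst (v j - (Ec + ε)) (t j) *
          ((l.map fun j => Tst (v j - (Ec + ε)) (t j)).prod -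
           (l.map fun j => Tst (v j - Ec) (t j)).prod)) ≤ Kj * (c * |ε|) := by
        refine le_trans (opNormR_mul_le _ _) ?_
        exact mul_le_mul (hg ε hε) hd (opNormR_nonneg _) hKj
      have h2 : opNormR ((Tst (v j - (Ec + ε)) (t j) - Tst (v j - Ec) (t j)) *
          (l.map fun j => Tst (v j - Ec) (t j)).prod) ≤ (cj * |ε|) * K := by
        refine le_trans (opNormR_mul_le _ _) ?_
        rw [hsite]
        exact mul_le_mul (le_refl _) hP0 (opNormR_nonneg _) (by positivity)
      calc _ ≤ Kj * (c * |ε|) + cj * |ε| * K := add_le_add h1 h2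
        _ = (Kj * c + cj * K) * |ε| := by ring
    · simp only [List.map_cons, List.prod_cons]
      refine le_trans (opNormR_mul_le _ _) ?_
      exact mul_le_mul (hg ε hε) hp (opNormR_nonneg _) hKj

lemma entry_le (A : Matrix (Fin 2) (Fin 2) ℝ) (i j : Fin 2) : |A i j| ≤ opNormR A := by
  classical
  set y : EuclideanSpace ℝ (Fin 2) :=
    Matrix.toEuclideanCLM (𝕜 := ℝ) A (EuclideanSpace.single j 1) with hy
  have h1 : ‖y‖ ≤ opNormR A := by
    have := (Matrix.toEuclideanCLM (𝕜 := ℝ) A).le_opNorm (EuclideanSpace.single j (1:ℝ))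
    rw [EuclideanSpace.norm_single] at this
    simpa [hy, opNormR] using this
  refine le_trans ?_ h1
  have hyi : y i = A i j := by
    have : y = (WithLp.equiv _ _).symm (Matrix.mulVec A (Pi.single j 1)) := rfl
    rw [this]
    simp [Matrix.mulVec_single]
  have habs : |y i| ≤ ‖y‖ := by
    rw [EuclideanSpace.norm_eq]
    have hterm : |y i| = Real.sqrt (‖y i‖ ^ 2) := by
      rw [Real.sqrt_sq_eq_abs, Real.norm_eq_abs, abs_abs]
    rw [hterm]
    apply Real.sqrt_le_sqrt
    exact Finset.single_le_sum (f := fun i => ‖y i‖ ^ 2)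
      (fun i _ => by positivity) (Finset.mem_univ i)
  rw [hyi] at habs
  exact habs

lemma rot_norm (η : ℝ) : opNormR (rotMat η) ≤ 1 := by
  have hstar : star (rotMat η) * rotMat η = 1 := by
    ext i j
    fin_cases i <;> fin_cases j <;>
      (simp [rotMat, Matrix.mul_apply, Fin.sum_univ_two, Matrix.one_apply];
       nlinarith [Real.sin_sq_add_cos_sq η])
  have h : star (Matrix.toEuclideanCLM (𝕜 := ℝ) (rotMat η)) *
      Matrix.toEuclideanCLM (𝕜 := ℝ) (rotMat η) = 1 := by
    rw [← map_star, ← map_mul, hstar, map_one]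
  have h2 : ‖Matrix.toEuclideanCLM (𝕜 := ℝ) (rotMat η)‖ *
      ‖Matrix.toEuclideanCLM (𝕜 := ℝ) (rotMat η)‖ = 1 := by
    rw [← CStarRing.norm_star_mul_self, h, norm_one]
  have h3 : 0 ≤ opNormR (rotMat η) := opNormR_nonneg _
  unfold opNormR at *
  nlinarith

lemma opNormR_ge_half {A : Matrix (Fin 2) (Fin 2) ℝ} (h : A.det = 1) :
    1 / 2 ≤ opNormR A := by
  have hd := Matrix.det_fin_two A
  rw [h] at hd
  have h00 := entry_le A 0 0
  have h01 := entry_le A 0 1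
  have h10 := entry_le A 1 0
  have h11 := entry_le A 1 1
  have hN := opNormR_nonneg A
  nlinarith [le_abs_self (A 0 0 * A 1 1), neg_abs_le (A 0 1 * A 1 0),
    abs_mul (A 0 0) (A 1 1), abs_mul (A 0 1) (A 1 0),
    mul_le_mul h00 h11 (abs_nonneg _) hN, mul_le_mul h01 h10 (abs_nonneg _) hN,
    abs_nonneg (A 0 0), abs_nonneg (A 0 1), abs_nonneg (A 1 0), abs_nonneg (A 1 1)]

lemma det_Tst (v t : ℝ) (ht : t ≠ 0) : (Tst v t).det = 1 := by
  unfold Tst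
  rw [Matrix.det_smul, Matrix.det_fin_two_of]
  simp only [Fintype.card_fin]
  field_simp
  ring

lemma det_prod_one {ι : Type*} (f : ι → Matrix (Fin 2) (Fin 2) ℝ) (l : List ι)
    (h : ∀ i ∈ l, (f i).det = 1) : ((l.map f).prod).det = 1 := by
  have hmh : ((l.map f).prod).det = Matrix.detMonoidHom ((l.map f).prod) := by
    rw [Matrix.coe_detMonoidHom]
  rw [hmh, MonoidHom.map_list_prod, List.map_map]
  apply List.prod_eq_one
  intro x hx
  obtain ⟨i, hi, rfl⟩ := List.mem_map.1 hx
  simpa [Matrix.coe_detMonoidHom] using h i hi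

lemma det_Tblock (Lb : ℕ) (v t : ℕ → ℝ) (E : ℝ) (ht : ∀ j, j < Lb → t j ≠ 0) :
    (Tblock Lb v t E).det = 1 := by
  unfold Tblock
  apply det_prod_one
  intro j hj
  exact det_Tst _ _ (ht j (List.mem_range.1 (List.mem_reverse.1 hj)))

end Stmt5Aux

/-- Deterministic bound on transfer matrices near a critical energy, and the resulting
linear bound on the Lyapunov exponent. -/
theorem stmt5
    (L : Bool → ℕ) (hL : ∀ s, 1 ≤ L s) (vh th : Bool → ℕ → ℝ)
    (hth : ∀ s j, j < L s → 0 < th s j) (Ec : ℝ)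
    (hcomm : Tpoly L vh th Ec true * Tpoly L vh th Ec false
           = Tpoly L vh th Ec false * Tpoly L vh th Ec true)
    (hell : ∀ s, |(Tpoly L vh th Ec s).trace| < 2 ∨
      Tpoly L vh th Ec s = 1 ∨ Tpoly L vh th Ec s = -1)
    (M : Matrix (Fin 2) (Fin 2) ℝ) (hM : IsUnit M.det) (η : Bool → ℝ)
    (hrot : ∀ s, M * Tpoly L vh th Ec s * M⁻¹ = rotMat (η s))
    (p : ℝ) (hp : 0 < p ∧ p < 1) (P₀ : Measure (ℤ → Bool))
    [IsProbabilityMeasure P₀]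
    (hiid : ProbabilityTheory.iIndepFun (fun (l : ℤ) (ω : ℤ → Bool) => ω l) P₀)
    (hber : ∀ l : ℤ, P₀ {ω | ω l = true} = ENNReal.ofReal p)
    (γ₀ : ℝ → ℝ)
    (hγ : ∀ E : ℝ, Tendsto (fun k : ℕ =>
        (1 / (k : ℝ)) * ∫ ω, Real.log (opNormR (TW L vh th ω E (k : ℤ) 0)) ∂P₀)
      atTop (nhds (γ₀ E)))
    (ε₀ : ℝ) (hε₀ : 0 < ε₀) :
    (∃ C : ℝ, ∀ ε : ℝ, |ε| ≤ ε₀ → ∀ (ω : ℤ → Bool) (m k : ℤ), m ≤ k →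
      opNormR (TW L vh th ω (Ec + ε) k m) ≤ C * Real.exp (C * |ε| * ((k - m : ℤ) : ℝ))) ∧
    ∃ C' : ℝ, ∀ ε : ℝ, |ε| ≤ ε₀ →
      |γ₀ (Ec + ε) / avgR p (fun s => (L s : ℝ))| ≤ C' * |ε| := by
  classical
  have hMr : M * M⁻¹ = 1 := Matrix.mul_nonsing_inv M hM
  have hMl : M⁻¹ * M = 1 := Matrix.nonsing_inv_mul M hM
  obtain ⟨cT, KT, hcT, hKT, hT⟩ := Stmt5Aux.block_lip Ec ε₀ hε₀.le (vh true) (th true)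
    ((List.range (L true)).reverse)
  obtain ⟨cF, KF, hcF, hKF, hF⟩ := Stmt5Aux.block_lip Ec ε₀ hε₀.le (vh false) (th false)
    ((List.range (L false)).reverse)
  set c₀ : ℝ := max cT cF with hc₀def
  have hc₀ : 0 ≤ c₀ := le_trans hcT (le_max_left _ _)
  have hdiff : ∀ (s : Bool) (ε : ℝ), |ε| ≤ ε₀ →
      opNormR (Tpoly L vh th (Ec + ε) s - Tpoly L vh th Ec s) ≤ c₀ * |ε| := by
    intro s ε hε
    cases s
    · simp only [Tpoly, Tblock]
      exact le_trans ((hF ε hε).1)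
        (mul_le_mul_of_nonneg_right (le_max_right _ _) (abs_nonneg _))
    · simp only [Tpoly, Tblock]
      exact le_trans ((hT ε hε).1)
        (mul_le_mul_of_nonneg_right (le_max_left _ _) (abs_nonneg _))
  set b : ℝ := opNormR M * opNormR M⁻¹ * c₀ with hbdef
  have hb : 0 ≤ b :=
    mul_nonneg (mul_nonneg (Stmt5Aux.opNormR_nonneg _) (Stmt5Aux.opNormR_nonneg _)) hc₀
  have hfact : ∀ (s : Bool) (ε : ℝ), |ε| ≤ ε₀ →
      opNormR (M * Tpoly L vh th (Ec + ε) s * M⁻¹) ≤ 1 + b * |ε| := by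
    intro s ε hε
    have hid : M * Tpoly L vh th (Ec + ε) s * M⁻¹
        = rotMat (η s) + M * (Tpoly L vh th (Ec + ε) s - Tpoly L vh th Ec s) * M⁻¹ := by
      rw [← hrot s]; noncomm_ring
    rw [hid]
    refine le_trans (Stmt5Aux.opNormR_add_le _ _) (add_le_add (Stmt5Aux.rot_norm _) ?_)
    refine le_trans (Stmt5Aux.opNormR_mul_le _ _) ?_
    have h1 : opNormR (M * (Tpoly L vh th (Ec + ε) s - Tpoly L vh th Ec s))
        ≤ opNormR M * (c₀ * |ε|) :=
      le_trans (Stmt5Aux.opNormR_mul_le _ _)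
        (mul_le_mul_of_nonneg_left (hdiff s ε hε) (Stmt5Aux.opNormR_nonneg _))
    calc opNormR (M * (Tpoly L vh th (Ec + ε) s - Tpoly L vh th Ec s)) * opNormR M⁻¹
        ≤ (opNormR M * (c₀ * |ε|)) * opNormR M⁻¹ :=
          mul_le_mul_of_nonneg_right h1 (Stmt5Aux.opNormR_nonneg _)
      _ = b * |ε| := by rw [hbdef]; ring
  set Dn : ℝ := opNormR M⁻¹ * opNormR M with hDdef
  have hDn : 0 ≤ Dn := mul_nonneg (Stmt5Aux.opNormR_nonneg _) (Stmt5Aux.opNormR_nonneg _)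
  have hbound : ∀ ε : ℝ, |ε| ≤ ε₀ → ∀ (ω : ℤ → Bool) (m k : ℤ), m ≤ k →
      opNormR (TW L vh th ω (Ec + ε) k m) ≤ Dn * Real.exp (b * |ε| * ((k - m : ℤ) : ℝ)) := by
    intro ε hε ω m k hmk
    have hcast : (((k - m).toNat : ℕ) : ℝ) = ((k - m : ℤ) : ℝ) := by
      exact_mod_cast congrArg (fun z : ℤ => (z : ℝ)) (Int.toNat_of_nonneg (sub_nonneg.2 hmk))
    have hconj := Stmt5Aux.conj_list_prod M M⁻¹ hMr hMl
      (fun i : ℕ => Tpoly L vh th (Ec + ε) (ω (k - 1 - (i : ℤ)))) (List.range (k - m).toNat)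
    have hTW : TW L vh th ω (Ec + ε) k m
        = M⁻¹ * ((List.range (k - m).toNat).map
            fun i : ℕ => M * Tpoly L vh th (Ec + ε) (ω (k - 1 - (i : ℤ))) * M⁻¹).prod * M := by
      rw [hconj, Stmt5Aux.unconj M M⁻¹ _ hMl]
      unfold TW
      simp [← List.map_eq_flatMap, List.map_map, Function.comp_def]
    rw [hTW]
    have hprod : opNormR (((List.range (k - m).toNat).map
        fun i : ℕ => M * Tpoly L vh th (Ec + ε) (ω (k - 1 - (i : ℤ))) * M⁻¹).prod)
        ≤ (1 + b * |ε|) ^ (k - m).toNat := by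
      have := Stmt5Aux.opNormR_prod_le
        (fun i : ℕ => M * Tpoly L vh th (Ec + ε) (ω (k - 1 - (i : ℤ))) * M⁻¹)
        (1 + b * |ε|) (by positivity) (List.range (k - m).toNat)
        (fun i _ => hfact _ ε hε)
      simpa using this
    have hexp : (1 + b * |ε|) ^ (k - m).toNat
        ≤ Real.exp (b * |ε| * ((k - m : ℤ) : ℝ)) := by
      have h1 : (1 + b * |ε|) ≤ Real.exp (b * |ε|) := by
        have := Real.add_one_le_exp (b * |ε|); linarith
      have h2 : (1 + b * |ε|) ^ (k - m).toNat ≤ Real.exp (b * |ε|) ^ (k - m).toNat :=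
        pow_le_pow_left₀ (by positivity) h1 _
      refine le_trans h2 ?_
      rw [← Real.exp_nat_mul, ← hcast]
      apply le_of_eq
      ring_nf
    calc opNormR (M⁻¹ * ((List.range (k - m).toNat).map
          fun i : ℕ => M * Tpoly L vh th (Ec + ε) (ω (k - 1 - (i : ℤ))) * M⁻¹).prod * M)
        ≤ opNormR (M⁻¹ * ((List.range (k - m).toNat).map
            fun i : ℕ => M * Tpoly L vh th (Ec + ε) (ω (k - 1 - (i : ℤ))) * M⁻¹).prod)
          * opNormR M := Stmt5Aux.opNormR_mul_le _ _
      _ ≤ (opNormR M⁻¹ * ((1 + b * |ε|) ^ (k - m).toNat)) * opNormR M := by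
          refine mul_le_mul_of_nonneg_right ?_ (Stmt5Aux.opNormR_nonneg _)
          exact le_trans (Stmt5Aux.opNormR_mul_le _ _)
            (mul_le_mul_of_nonneg_left hprod (Stmt5Aux.opNormR_nonneg _))
      _ = Dn * ((1 + b * |ε|) ^ (k - m).toNat) := by rw [hDdef]; ring
      _ ≤ Dn * Real.exp (b * |ε| * ((k - m : ℤ) : ℝ)) :=
          mul_le_mul_of_nonneg_left hexp hDn
  set C : ℝ := max 1 (max Dn b) with hCdef
  have hC1 : (1:ℝ) ≤ C := le_max_left _ _
  have hC0 : (0:ℝ) < C := lt_of_lt_of_le zero_lt_one hC1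
  have hDnC : Dn ≤ C := le_trans (le_max_left _ _) (le_max_right _ _)
  have hbC : b ≤ C := le_trans (le_max_right _ _) (le_max_right _ _)
  have hboundC : ∀ ε : ℝ, |ε| ≤ ε₀ → ∀ (ω : ℤ → Bool) (m k : ℤ), m ≤ k →
      opNormR (TW L vh th ω (Ec + ε) k m) ≤ C * Real.exp (C * |ε| * ((k - m : ℤ) : ℝ)) := by
    intro ε hε ω m k hmk
    refine le_trans (hbound ε hε ω m k hmk) ?_
    have hx : (0:ℝ) ≤ ((k - m : ℤ) : ℝ) := by
      have : (0:ℤ) ≤ k - m := sub_nonneg.2 hmk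
      exact_mod_cast this
    have harg : b * |ε| * ((k - m : ℤ) : ℝ) ≤ C * |ε| * ((k - m : ℤ) : ℝ) := by
      have : b * |ε| ≤ C * |ε| := mul_le_mul_of_nonneg_right hbC (abs_nonneg _)
      exact mul_le_mul_of_nonneg_right this hx
    exact mul_le_mul hDnC (Real.exp_le_exp.2 harg) (Real.exp_pos _).le hC0.le
  refine ⟨⟨C, hboundC⟩, C, ?_⟩
  -- Part 2
  have hdetTW : ∀ (ε : ℝ) (ω : ℤ → Bool) (k : ℕ),
      (TW L vh th ω (Ec + ε) (k : ℤ) 0).det = 1 := by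
    intro ε ω k
    unfold TW
    apply Stmt5Aux.det_prod_one
    intro i _
    exact Stmt5Aux.det_Tblock _ _ _ _ (fun j hj => (hth _ j hj).ne')
  have hL1 : (1:ℝ) ≤ (L true : ℝ) := by exact_mod_cast hL true
  have hL0 : (1:ℝ) ≤ (L false : ℝ) := by exact_mod_cast hL false
  have havg : 1 ≤ avgR p (fun s => (L s : ℝ)) := by
    unfold avgR
    nlinarith [hp.1, hp.2]
  intro ε hε
  have hlogC : 0 ≤ Real.log C := Real.log_nonneg hC1
  have hpoint : ∀ (ω : ℤ → Bool) (k : ℕ),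
      |Real.log (opNormR (TW L vh th ω (Ec + ε) (k : ℤ) 0))|
        ≤ (1 + Real.log C) + (C * |ε|) * k := by
    intro ω k
    set x := opNormR (TW L vh th ω (Ec + ε) (k : ℤ) 0) with hx
    have hxh : 1 / 2 ≤ x := Stmt5Aux.opNormR_ge_half (hdetTW ε ω k)
    have hxpos : (0:ℝ) < x := lt_of_lt_of_le (by norm_num) hxh
    have hCk : (0:ℝ) ≤ (C * |ε|) * k := by positivity
    have hup : Real.log x ≤ Real.log C + (C * |ε|) * k := by
      have hb1 := hboundC ε hε ω 0 (k : ℤ) (Int.natCast_nonneg k)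
      have hcast : (((k : ℤ) - 0 : ℤ) : ℝ) = (k : ℝ) := by push_cast; ring
      rw [hcast] at hb1
      calc Real.log x ≤ Real.log (C * Real.exp (C * |ε| * k)) := Real.log_le_log hxpos hb1
        _ = Real.log C + (C * |ε|) * k := by
            rw [Real.log_mul (ne_of_gt hC0) (Real.exp_ne_zero _), Real.log_exp]
    have hdown : -((1 + Real.log C) + (C * |ε|) * k) ≤ Real.log x := by
      have h2 : Real.log (1 / 2) ≤ Real.log x := Real.log_le_log (by norm_num) hxh
      have h3 : Real.log (1 / 2) = -Real.log 2 := by rw [one_div, Real.log_inv]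
      have hl2 : Real.log 2 ≤ 1 := by nlinarith [Real.log_two_lt_d9]
      linarith
    exact abs_le.mpr ⟨hdown, by linarith⟩
  have hint : ∀ k : ℕ,
      |∫ ω, Real.log (opNormR (TW L vh th ω (Ec + ε) (k : ℤ) 0)) ∂P₀|
        ≤ (1 + Real.log C) + (C * |ε|) * k := by
    intro k
    have := norm_integral_le_of_norm_le_const (μ := P₀)
      (f := fun ω => Real.log (opNormR (TW L vh th ω (Ec + ε) (k : ℤ) 0)))
      (C := (1 + Real.log C) + (C * |ε|) * k)
      (Filter.Eventually.of_forall fun ω => by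
        simpa [Real.norm_eq_abs] using hpoint ω k)
    simpa [Real.norm_eq_abs, measure_univ] using this
  have hseq : ∀ k : ℕ,
      |(1 / (k : ℝ)) * ∫ ω, Real.log (opNormR (TW L vh th ω (Ec + ε) (k : ℤ) 0)) ∂P₀|
        ≤ (1 + Real.log C) * (1 / (k : ℝ)) + C * |ε| := by
    intro k
    rcases Nat.eq_zero_or_pos k with hk | hk
    · subst hk
      have h1 : (0:ℝ) ≤ C * |ε| := by positivity
      simp only [Nat.cast_zero, div_zero, zero_mul, abs_zero, mul_zero, zero_add]
      linarith
    · have hkpos : (0:ℝ) < (k : ℝ) := by exact_mod_cast hk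
      rw [abs_mul, abs_of_nonneg (by positivity : (0:ℝ) ≤ 1 / (k : ℝ))]
      calc (1 / (k : ℝ)) * |∫ ω, Real.log (opNormR (TW L vh th ω (Ec + ε) (k : ℤ) 0)) ∂P₀|
          ≤ (1 / (k : ℝ)) * ((1 + Real.log C) + (C * |ε|) * k) :=
            mul_le_mul_of_nonneg_left (hint k) (by positivity)
        _ = (1 + Real.log C) * (1 / (k : ℝ)) + C * |ε| := by
            field_simp
  have htend : Tendsto (fun k : ℕ => (1 + Real.log C) * (1 / (k : ℝ)) + C * |ε|)
      atTop (nhds (C * |ε|)) := by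
    have h0 : Tendsto (fun k : ℕ => (1 / (k : ℝ))) atTop (nhds 0) :=
      tendsto_one_div_atTop_nhds_zero_nat
    have := (h0.const_mul (1 + Real.log C)).add (tendsto_const_nhds (x := C * |ε|))
    simpa using this
  have habs : Tendsto (fun k : ℕ =>
      |(1 / (k : ℝ)) * ∫ ω, Real.log (opNormR (TW L vh th ω (Ec + ε) (k : ℤ) 0)) ∂P₀|)
      atTop (nhds |γ₀ (Ec + ε)|) := (hγ (Ec + ε)).abs
  have hγle : |γ₀ (Ec + ε)| ≤ C * |ε| := le_of_tendsto_of_tendsto' habs htend hseq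
  have havgabs : (1:ℝ) ≤ |avgR p (fun s => (L s : ℝ))| := by
    rw [abs_of_nonneg (by linarith)]
    exact havg
  calc |γ₀ (Ec + ε) / avgR p (fun s => (L s : ℝ))|
      = |γ₀ (Ec + ε)| / |avgR p (fun s => (L s : ℝ))| := abs_div _ _
    _ ≤ |γ₀ (Ec + ε)| / 1 := by
        apply div_le_div_of_nonneg_left (abs_nonneg _) zero_lt_one havgabs
    _ = |γ₀ (Ec + ε)| := div_one _
    _ ≤ C * |ε| := hγle
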